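/- Let R = ⟨A,V,C,W,h⟩ be a restricted regular constraint over Σ and let s, t ∈ T_Σ(V). If s is determined at all non-variable positions of t and s is not structurally subsumed by t with respect to R, then L(⟨{s},R⟩) and L(⟨{t},R⟩) are disjoint. -/

import Mathlib

namespace RITRC

/-- Terms over a signature (symbols `F` with arities `ar`) with variables in `V`. -/
inductive Term (F : Type) (ar : F → ℕ) (V : Type) : Type where
  | var : V → Term F ar V
  | app : (f : F) → (Fin (ar f) → Term F ar V) → Term F ar V

/-- Ground terms (terms without variables). -/
abbrev GTerm (F : Type) (ar : F → ℕ) : Type := Term F ar Empty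

variable {F V V' Q : Type} {ar : F → ℕ}

/-- Applying a substitution to a term. -/
def Term.subst (φ : V → Term F ar V') : Term F ar V → Term F ar V'
  | .var x => φ x
  | .app f ts => .app f (fun i => (ts i).subst φ)

/-- The height of a term. -/
def Term.height : Term F ar V → ℕ
  | .var _ => 0
  | .app _ ts => Finset.univ.sup (fun i => (ts i).height + 1)

/-- The size of a term. -/
def Term.size : Term F ar V → ℕ
  | .var _ => 1
  | .app _ ts => 1 + ∑ i, (ts i).size

/-- The subterm of a term at a position (a list of child indices), if it exists. -/
def Term.sub : Term F ar V → List ℕ → Option (Term F ar V)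
  | t, [] => some t
  | .var _, _ :: _ => none
  | .app f ts, i :: p => if h : i < ar f then (ts ⟨i, h⟩).sub p else none

/-- The root symbol of a term: a function symbol or a variable. -/
def Term.rootSym : Term F ar V → F ⊕ V
  | .var x => .inr x
  | .app f _ => .inl f

/-- `p` is a position of `t`. -/
def Term.isPos (t : Term F ar V) (p : List ℕ) : Prop := t.sub p ≠ none

/-- `p` is a variable position of `t`. -/
def Term.isVarPos (t : Term F ar V) (p : List ℕ) : Prop :=
  ∃ x, t.sub p = some (Term.var x)

/-- `p` is a non-variable position of `t`. -/
def Term.isNonVarPos (t : Term F ar V) (p : List ℕ) : Prop :=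
  ∃ f ts, t.sub p = some (Term.app f ts)

/-- The variable `x` occurs in `t`. -/
def Term.varOccurs (t : Term F ar V) (x : V) : Prop :=
  ∃ p, t.sub p = some (Term.var x)

/-- The variable `x` occurs at least twice in `t`. -/
def Term.occursTwice (t : Term F ar V) (x : V) : Prop :=
  ∃ p q, p ≠ q ∧ t.sub p = some (Term.var x) ∧ t.sub q = some (Term.var x)

/-- `t` is determined at position `p`: either `p` is a non-variable position
of `t`, or some prefix of `p` is labeled by a constant symbol. -/
def Term.determinedAt (t : Term F ar V) (p : List ℕ) : Prop :=
  t.isNonVarPos p ∨ ∃ p', p' <+: p ∧ ∃ f ts, t.sub p' = some (Term.app f ts) ∧ ar f = 0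

/-- A deterministic tree automaton: at most one transition `f(q₁,…,qₖ) → q`
for every `f` and states `q₁,…,qₖ`. -/
structure DTA (F : Type) (ar : F → ℕ) (Q : Type) : Type where
  δ : (f : F) → (Fin (ar f) → Q) → Option Q

/-- Collect a family of optional values into an optional family. -/
def allSome {n : ℕ} {α : Type} (g : Fin n → Option α) : Option (Fin n → α) :=
  if h : ∀ i, (g i).isSome then some (fun i => (g i).get (h i)) else none

/-- The state reached by `A` on a term, where variables are pre-assigned states by `C`. -/
def DTA.runC (A : DTA F ar Q) (C : V → Q) : Term F ar V → Option Q
  | .var x => some (C x)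
  | .app f ts => (allSome (fun i => A.runC C (ts i))).bind (A.δ f)

/-- The state reached by `A` on a ground term. -/
def DTA.run (A : DTA F ar Q) : GTerm F ar → Option Q :=
  A.runC (fun x => x.elim)

/-- `L(A,q)`: the set of ground terms on which `A` reaches state `q`. -/
def DTA.lang (A : DTA F ar Q) (q : Q) : Set (GTerm F ar) :=
  {t | A.run t = some q}

/-- `A` is complete. -/
def DTA.Complete (A : DTA F ar Q) : Prop :=
  ∀ (f : F) (qs : Fin (ar f) → Q), (A.δ f qs).isSome

/-- `A` is a 1-or-n DTA: each state has exactly one, or at least `n`, terms. -/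
def DTA.OneOr (A : DTA F ar Q) (n : ℕ) : Prop :=
  ∀ q : Q, (A.lang q).encard = 1 ∨ (n : ℕ∞) ≤ (A.lang q).encard

/-- The number of transitions of a DTA. -/
noncomputable def DTA.numTrans [Fintype F] [Fintype Q] (A : DTA F ar Q) : ℕ :=
  ∑ f : F, ∑ qs : Fin (ar f) → Q, if (A.δ f qs).isSome then 1 else 0

/-- A set of ground terms is regular if it is recognized by some (finite) DTA. -/
def IsRegular (L : Set (GTerm F ar)) : Prop :=
  ∃ (Q : Type) (_ : Fintype Q) (A : DTA F ar Q) (Facc : Set Q),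
    L = {t | ∃ q ∈ Facc, A.run t = some q}

/-- A DTA bundled with its (finite) state type and accepting states. -/
structure NDTA (F : Type) (ar : F → ℕ) : Type 1 where
  Q : Type
  fin : Fintype Q
  A : DTA F ar Q
  acc : Set Q

/-- The language recognized by a bundled DTA. -/
def NDTA.lang (N : NDTA F ar) : Set (GTerm F ar) :=
  {t | ∃ q ∈ N.acc, N.A.run t = some q}

/-- The size of a bundled DTA: number of states plus sum of sizes of transitions. -/
noncomputable def NDTA.size [Fintype F] (N : NDTA F ar) : ℕ :=
  letI := N.fin
  Fintype.card N.Q +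
    ∑ f : F, ∑ qs : Fin (ar f) → N.Q, if (N.A.δ f qs).isSome then ar f + 2 else 0

/-- `L(⟨S,M⟩)`: the language of a set of terms `S` with regular constraints `M`. -/
def langM (S : Set (Term F ar V)) (M : V → NDTA F ar) : Set (GTerm F ar) :=
  {t | ∃ s ∈ S, ∃ φ : V → GTerm F ar, (∀ x, φ x ∈ (M x).lang) ∧ t = s.subst φ}

/-- `L(⟨S,R⟩)` for a single regular constraint `R = ⟨A,C⟩`. -/
def langSingle (S : Set (Term F ar V)) (A : DTA F ar Q) (C : V → Q) :
    Set (GTerm F ar) :=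
  {t | ∃ s ∈ S, ∃ φ : V → GTerm F ar, (∀ x, A.run (φ x) = some (C x)) ∧ t = s.subst φ}

/-- A restricted regular constraint `R = ⟨A,V,C,W,h⟩`. -/
structure RRC (F : Type) (ar : F → ℕ) (V Q : Type) : Type where
  A : DTA F ar Q
  C : V → Q
  W : Set V
  hgt : ℕ

/-- A solution of a restricted regular constraint. -/
def RRC.IsSolution (R : RRC F ar V Q) (φ : V → GTerm F ar) : Prop :=
  (∀ x, R.A.run (φ x) = some (R.C x)) ∧ ∀ x ∈ R.W, (φ x).height ≤ R.hgt

/-- `L(⟨S,R⟩)` for a restricted regular constraint `R`. -/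
def RRC.lang (R : RRC F ar V Q) (S : Set (Term F ar V)) : Set (GTerm F ar) :=
  {t | ∃ s ∈ S, ∃ φ, R.IsSolution φ ∧ t = s.subst φ}

/-- Renaming the variables of a term. -/
def Term.rename (ρ : V → V') (t : Term F ar V) : Term F ar V' :=
  t.subst (fun x => Term.var (ρ x))

/-- `s` and `t` are structurally similar: `t` is obtained from `s` by an
injective variable renaming. -/
def StructSim (s : Term F ar V) (t : Term F ar V') : Prop :=
  ∃ ρ : V → V', Function.Injective ρ ∧ t = s.rename ρ

/-- `s` and `t` are structurally equal with respect to the state assignment `C`. -/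
def StructEq (C : V → Q) (s t : Term F ar V) : Prop :=
  StructSim s t ∧
    ∀ p x y, s.sub p = some (Term.var x) → t.sub p = some (Term.var y) → C x = C y

/-- `s` is structurally subsumed by `t` (with respect to `A` and `C`). -/
def StructSub (A : DTA F ar Q) (C : V → Q) (s t : Term F ar V) : Prop :=
  (∀ p f ts, t.sub p = some (Term.app f ts) →
    ∃ sp, s.sub p = some sp ∧ sp.rootSym = Sum.inl f) ∧
  (∀ p tp, t.sub p = some tp → ∃ sp, s.sub p = some sp ∧ A.runC C tp = A.runC C sp)

/-- Building a binary term `f(t,u)` from a symbol of arity 2. -/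
def mkBin {f : F} (h : ar f = 2) (t u : Term F ar V) : Term F ar V :=
  Term.app f (fun i => if (i : ℕ) = 0 then t else u)

/-- `s` satisfies the infinite-instances property in `⟨S,R⟩`. -/
def InfiniteInstances (R : RRC F ar V Q) (S : Set (Term F ar V)) (s : Term F ar V) :
    Prop :=
  ∃ x, s.occursTwice x ∧
    ∃ φ : ℕ → (V → GTerm F ar),
      (∀ i, R.IsSolution (φ i)) ∧
      (∀ i, s.subst (φ i) ∉ R.lang (S \ {s})) ∧
      (∀ i j, i ≠ j → φ i x ≠ φ j x)

/-- The set of prefixes of a finite set of positions. -/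
def prefixes (P : Finset (List ℕ)) : Finset (List ℕ) :=
  P.biUnion (fun p => p.inits.toFinset)


theorem Term.sub_append' (g : Term F ar V) (p q : List ℕ) :
    g.sub (p ++ q) = (g.sub p).bind (fun u => u.sub q) := by
  induction p generalizing g with
  | nil => simp [Term.sub]
  | cons i p ih =>
    cases g with
    | var x => simp [Term.sub]
    | app f ts =>
      simp only [List.cons_append, Term.sub]
      split
      · exact ih _
      · simp

theorem Term.sub_subst (φ : V → Term F ar V') :
    ∀ (p : List ℕ) (u up : Term F ar V),
    u.sub p = some up → (u.subst φ).sub p = some (up.subst φ) := by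
  intro p
  induction p with
  | nil =>
    intro u up h
    simp only [Term.sub, Option.some.injEq] at h ⊢
    exact congrArg _ h
  | cons i p ih =>
    intro u up h
    cases u with
    | var x => simp [Term.sub] at h
    | app f ts =>
      simp only [Term.sub] at h
      split at h
      · simp only [Term.subst, Term.sub]
        rw [dif_pos ‹_›]
        exact ih _ _ h
      · exact absurd h (by simp)

theorem run_subst' (A : DTA F ar Q) (C : V → Q) (φ : V → GTerm F ar)
    (hφ : ∀ x, A.run (φ x) = some (C x)) :
    ∀ u : Term F ar V, A.run (u.subst φ) = A.runC C u := by
  intro u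
  induction u with
  | var x => simpa [Term.subst, DTA.runC] using hφ x
  | app f ts ih =>
    simp only [Term.subst, DTA.run, DTA.runC] at *
    congr 2
    funext i
    exact ih i

/-- if `s` is determined at all non-variable positions of `t` and
`s` is not structurally subsumed by `t`, then `L(⟨{s},R⟩)` and `L(⟨{t},R⟩)`
are disjoint. -/
theorem disjoint_of_not_structSub {F V Q : Type} {ar : F → ℕ}
    [Fintype F] [Fintype Q] [Fintype V]
    (R : RRC F ar V Q) (s t : Term F ar V)
    (hdet : ∀ p : List ℕ, t.isNonVarPos p → s.determinedAt p)
    (hnsub : ¬ StructSub R.A R.C s t) :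
    Disjoint (R.lang {s}) (R.lang {t}) := by
  rw [Set.disjoint_left]
  rintro g ⟨s', hs', φ, hφ, rfl⟩ ⟨t', ht', ψ, hψ, heq⟩
  rw [Set.mem_singleton_iff] at hs' ht'
  subst s'
  subst t'
  apply hnsub
  -- key fact: if t has an app at p, then s has an app with the same symbol at p
  have key : ∀ p f ts, t.sub p = some (Term.app f ts) →
      ∃ ss, s.sub p = some (Term.app f ss) := by
    intro p f ts htp
    -- helper: any app of s at p must have root symbol f
    have same : ∀ (f' : F) (ss : Fin (ar f') → Term F ar V),
        s.sub p = some (Term.app f' ss) → f' = f := by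
      intro f' ss hsp
      have h1 := Term.sub_subst φ p s _ hsp
      have h2 := Term.sub_subst ψ p t _ htp
      rw [← heq, h1] at h2
      simp only [Term.subst, Option.some.injEq, Term.app.injEq] at h2
      exact h2.1
    rcases hdet p ⟨f, ts, htp⟩ with ⟨f', ss, hsp⟩ | ⟨p', hpre, f₀, ts₀, hsp', har⟩
    · obtain rfl := same f' ss hsp
      exact ⟨ss, hsp⟩
    · have hp'p : p' = p := by
        by_contra hne
        obtain ⟨q, rfl⟩ := hpre
        have hq : q ≠ [] := by rintro rfl; simp at hne
        obtain ⟨j, q', rfl⟩ := List.exists_cons_of_ne_nil hq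
        have h1 := Term.sub_subst φ p' s _ hsp'
        have hnone : (s.subst φ).sub (p' ++ j :: q') = none := by
          rw [Term.sub_append', h1]
          simp [Term.subst, Term.sub, har]
        have h2 := Term.sub_subst ψ (p' ++ j :: q') t _ htp
        rw [← heq, hnone] at h2
        exact absurd h2 (by simp)
      subst hp'p
      obtain rfl := same f₀ ts₀ hsp'
      exact ⟨ts₀, hsp'⟩
  -- s has a subterm at every position of t
  have spos : ∀ p (tp : Term F ar V), t.sub p = some tp →
      ∃ sp, s.sub p = some sp := by
    intro p tp htp
    rcases List.eq_nil_or_concat p with rfl | ⟨p₀, i, rfl⟩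
    · exact ⟨s, by simp [Term.sub]⟩
    · simp only [List.concat_eq_append] at htp ⊢
      rw [Term.sub_append'] at htp
      cases hu : t.sub p₀ with
      | none => rw [hu] at htp; simp at htp
      | some u =>
        rw [hu] at htp
        simp only [Option.bind_some] at htp
        cases u with
        | var x => simp [Term.sub] at htp
        | app f ts =>
          simp only [Term.sub] at htp
          split at htp
          · obtain ⟨ss, hss⟩ := key p₀ f ts hu
            refine ⟨ss ⟨i, ‹_›⟩, ?_⟩
            rw [Term.sub_append', hss]
            simp only [Option.bind_some, Term.sub]
            rw [dif_pos ‹_›]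
          · exact absurd htp (by simp)
  constructor
  · intro p f ts htp
    obtain ⟨ss, hss⟩ := key p f ts htp
    exact ⟨_, hss, rfl⟩
  · intro p tp htp
    obtain ⟨sp, hsp⟩ := spos p tp htp
    refine ⟨sp, hsp, ?_⟩
    have h1 := Term.sub_subst φ p s _ hsp
    have h2 := Term.sub_subst ψ p t _ htp
    rw [← heq, h1] at h2
    simp only [Option.some.injEq] at h2
    rw [← run_subst' R.A R.C ψ hψ.1 tp, ← run_subst' R.A R.C φ hφ.1 sp, h2]

end RITRC
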